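/- Under conditionally independent censoring with G(t|x,a) > 0, if the outcome model is correct, i.e., Ŝ(x,a,t) = S(x,a,t) for all (x,a), then the IPCW-DR estimator is unbiased for V(π_e,t) regardless of the weights w(x,a) used: E[w(x,a)(I{min(L,C)>t}/G(t|x,a) − S(x,a,t)) + Σ_{a'} π_e(a'|x) S(x,a',t)] = V(π_e,t), where the expectation is over (x,a,L,C) ~ p(x)π_0(a|x)p(L,C|x,a). -/

import Mathlib

open MeasureTheory Finset

/-- Unbiasedness of the IPCW-DR estimator when the outcome model is correct
(`Ŝ = S`), for an arbitrary weight function `w`. -/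
theorem ipcw_dr_unbiased_outcome
    {X A Ω : Type*} [Fintype X] [Fintype A] [MeasurableSpace Ω]
    (p : X → ℝ) (hp : ∀ x, 0 ≤ p x) (hp1 : ∑ x, p x = 1)
    (π0 πe : X → A → ℝ)
    (hπ0 : ∀ x a, 0 ≤ π0 x a) (hπ0s : ∀ x, ∑ a, π0 x a = 1)
    (hπe : ∀ x a, 0 ≤ πe x a) (hπes : ∀ x, ∑ a, πe x a = 1)
    (μ : X → A → Measure Ω) [∀ x a, IsProbabilityMeasure (μ x a)]
    (L C : Ω → ℝ) (hL : Measurable L) (hC : Measurable C)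
    (hInd : ∀ x a (s u : ℝ), μ x a {ω | s < L ω ∧ u < C ω} =
      μ x a {ω | s < L ω} * μ x a {ω | u < C ω})
    (t : ℝ)
    (hG : ∀ x a, 0 < (μ x a {ω | t < C ω}).toReal)
    (w : X → A → ℝ) :
    ∑ x, p x * ∑ a, π0 x a *
        ∫ ω, (w x a *
            (Set.indicator {ω : Ω | t < min (L ω) (C ω)} (fun _ => (1 : ℝ)) ω
              / (μ x a {ω | t < C ω}).toReal - (μ x a {ω | t < L ω}).toReal)
          + ∑ a', πe x a' * (μ x a' {ω | t < L ω}).toReal) ∂(μ x a)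
      = ∑ x, p x * ∑ a, πe x a * (μ x a {ω | t < L ω}).toReal := by
  have key : ∀ x a, (∫ ω, (w x a *
            (Set.indicator {ω : Ω | t < min (L ω) (C ω)} (fun _ => (1 : ℝ)) ω
              / (μ x a {ω | t < C ω}).toReal - (μ x a {ω | t < L ω}).toReal)
          + ∑ a', πe x a' * (μ x a' {ω | t < L ω}).toReal) ∂(μ x a))
      = ∑ a', πe x a' * (μ x a' {ω | t < L ω}).toReal := by
    intro x a
    have hset : {ω : Ω | t < min (L ω) (C ω)} = {ω : Ω | t < L ω ∧ t < C ω} := by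
      ext ω; simp [lt_min_iff]
    have hmeas : MeasurableSet {ω : Ω | t < L ω ∧ t < C ω} :=
      (measurableSet_lt measurable_const hL).inter (measurableSet_lt measurable_const hC)
    have hfin : μ x a {ω : Ω | t < L ω ∧ t < C ω} ≠ ⊤ := measure_ne_top _ _
    have hind : Integrable (Set.indicator {ω : Ω | t < min (L ω) (C ω)} (fun _ => (1 : ℝ)))
        (μ x a) := by
      rw [hset]
      exact (integrable_const (1 : ℝ)).indicator hmeas
    have hintind : (∫ ω, Set.indicator {ω : Ω | t < min (L ω) (C ω)} (fun _ => (1 : ℝ)) ω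
        ∂(μ x a)) = (μ x a {ω : Ω | t < L ω ∧ t < C ω}).toReal := by
      rw [hset]; exact integral_indicator_one hmeas
    have hint1 : Integrable (fun ω => w x a *
        (Set.indicator {ω : Ω | t < min (L ω) (C ω)} (fun _ => (1 : ℝ)) ω
          / (μ x a {ω | t < C ω}).toReal - (μ x a {ω | t < L ω}).toReal)) (μ x a) := by
      apply Integrable.const_mul
      exact (hind.div_const _).sub (integrable_const _)
    rw [integral_add hint1 (integrable_const _), integral_const, probReal_univ,
      one_smul, integral_const_mul, integral_sub (hind.div_const _)
      (integrable_const _), integral_div, hintind, integral_const, probReal_univ,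
      one_smul]
    have : {ω : Ω | t < L ω ∧ t < C ω} = {ω | t < L ω ∧ t < C ω} := rfl
    rw [show μ x a {ω : Ω | t < L ω ∧ t < C ω} = μ x a {ω | t < L ω} * μ x a {ω | t < C ω}
      from hInd x a t t]
    rw [ENNReal.toReal_mul, mul_div_assoc, div_self (hG x a).ne', mul_one, sub_self,
      mul_zero, zero_add]
  simp only [key]
  have step : ∀ x, ∑ a, π0 x a * ∑ a', πe x a' * (μ x a' {ω | t < L ω}).toReal
      = ∑ a, πe x a * (μ x a {ω | t < L ω}).toReal := by
    intro x
    rw [← Finset.sum_mul, hπ0s, one_mul]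
  simp only [step]
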